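/- Tail tightness: Define φ(x) = log 2 - (1/2)((1+x)log(1+x)+(1-x)log(1-x)). For every ε > 0 there exists A > 0 such that for every 1-Lipschitz f: ℝ → ℝ with f ≥ |·| and ∫_ℝ (f(x)-|x|)dx ≤ 1, one has ∫_{ℝ \ [-A,A]} φ(f'(x)) dx < ε. In particular ∫_ℝ φ∘f' converges for every such f. -/

import Mathlib

open MeasureTheory
open scoped ENNReal

/-- Tail tightness: With
`φ(x) = log 2 - (1/2)((1+x)log(1+x)+(1-x)log(1-x))`, for every `ε > 0` there is
`A > 0` such that for every 1-Lipschitz `f : ℝ → ℝ` with `f ≥ |·|`,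
`∫ (f - |·|) ≤ 1`, and a.e. derivative `f'`, the function `φ ∘ f'` is integrable on
`ℝ` and `∫_{ℝ \ [-A,A]} φ(f'(x)) dx < ε`. -/


lemma mul_log_ge {y : ℝ} (hy : 0 ≤ y) : y - 1 ≤ y * Real.log y := by
  rcases hy.eq_or_lt with h | h
  · simp [← h]
  · have h1 : Real.log y⁻¹ ≤ y⁻¹ - 1 := Real.log_le_sub_one_of_pos (by positivity)
    rw [Real.log_inv] at h1
    have h2 : 1 - y⁻¹ ≤ Real.log y := by linarith
    have := mul_le_mul_of_nonneg_left h2 hy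
    have hyy : y * y⁻¹ = 1 := mul_inv_cancel₀ h.ne'
    nlinarith

lemma tangent_ineq {s : ℝ} (h0 : 0 ≤ s) (h2 : s ≤ 2) :
    (2 - s) * Real.log 2 - s ≤ (2 - s) * Real.log (2 - s) := by
  rcases eq_or_lt_of_le h2 with h | h
  · rw [← h]; norm_num
    nlinarith [Real.log_pos (by norm_num : (1:ℝ) < 2)]
  · have hpos : (0:ℝ) < 1 - s / 2 := by linarith
    have hlog : Real.log (2 - s) = Real.log 2 + Real.log (1 - s / 2) := by
      rw [show (2:ℝ) - s = 2 * (1 - s / 2) by ring, Real.log_mul (by norm_num) hpos.ne']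
    have hml := mul_log_ge (le_of_lt hpos)
    have key : (2 - s) * Real.log (1 - s / 2) = 2 * ((1 - s / 2) * Real.log (1 - s / 2)) := by
      ring
    have hthis : (2 - s) * Real.log (2 - s)
        = (2 - s) * Real.log 2 + (2 - s) * Real.log (1 - s / 2) := by rw [hlog]; ring
    nlinarith [hml, key, hthis]

lemma two_rpow_quarter_le : (2:ℝ) ^ ((1:ℝ)/4) ≤ 1.2 := by
  by_contra h
  push_neg at h
  have h4 : ((1.2:ℝ)) ^ (4:ℕ) < ((2:ℝ) ^ ((1:ℝ)/4)) ^ (4:ℕ) :=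
    pow_lt_pow_left₀ h (by norm_num) (by norm_num)
  rw [← Real.rpow_natCast ((2:ℝ) ^ ((1:ℝ)/4)) 4, ← Real.rpow_mul (by norm_num)] at h4
  norm_num at h4

lemma s_le_rpow {s : ℝ} (h0 : 0 ≤ s) (h2 : s ≤ 2) : s ≤ 1.2 * s ^ ((3:ℝ)/4) := by
  have h1 : s = s ^ ((1:ℝ)/4) * s ^ ((3:ℝ)/4) := by
    rw [← Real.rpow_add' h0 (by norm_num)]; norm_num
  have h3 : s ^ ((1:ℝ)/4) ≤ (2:ℝ) ^ ((1:ℝ)/4) := Real.rpow_le_rpow h0 h2 (by norm_num)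
  have h5 : (0:ℝ) ≤ s ^ ((3:ℝ)/4) := Real.rpow_nonneg h0 _
  nlinarith [two_rpow_quarter_le]

lemma neg_mul_log_le {s : ℝ} (h0 : 0 ≤ s) : -(s * Real.log s) ≤ 4 * s ^ ((3:ℝ)/4) := by
  rcases h0.eq_or_lt with h | h
  · simp [← h]
  · have h1 : Real.log (s ^ (-(1:ℝ)/4)) ≤ s ^ (-(1:ℝ)/4) - 1 :=
      Real.log_le_sub_one_of_pos (Real.rpow_pos_of_pos h _)
    rw [Real.log_rpow h] at h1
    have h2 : -Real.log s ≤ 4 * s ^ (-(1:ℝ)/4) := by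
      nlinarith [Real.rpow_pos_of_pos h (-(1:ℝ)/4)]
    have h3 : s * -Real.log s ≤ s * (4 * s ^ (-(1:ℝ)/4)) := mul_le_mul_of_nonneg_left h2 h0
    have h4 : s * s ^ (-(1:ℝ)/4) = s ^ ((3:ℝ)/4) := by
      rw [show s * s ^ (-(1:ℝ)/4) = s ^ (1:ℝ) * s ^ (-(1:ℝ)/4) by rw [Real.rpow_one],
        ← Real.rpow_add h]
      norm_num
    nlinarith

lemma phi_bound_s {s : ℝ} (h0 : 0 ≤ s) (h2 : s ≤ 2) :
    Real.log 2 - (1/2) * ((2 - s) * Real.log (2 - s) + s * Real.log s) ≤ 4 * s ^ ((3:ℝ)/4) := by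
  have hexp := tangent_ineq h0 h2
  have hneg := neg_mul_log_le h0
  have hsr := s_le_rpow h0 h2
  have hlog2 : Real.log 2 ≤ 0.6931471808 := le_of_lt Real.log_two_lt_d9
  have hlog2' : (0:ℝ) < Real.log 2 := Real.log_pos (by norm_num)
  nlinarith

lemma phi_key {φ : ℝ → ℝ}
    (hφ : ∀ x, φ x = Real.log 2 -
      (1 / 2) * ((1 + x) * Real.log (1 + x) + (1 - x) * Real.log (1 - x)))
    {t : ℝ} (ht : |t| ≤ 1) : φ t ≤ 4 * (1 - t) ^ ((3:ℝ)/4) := by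
  rw [abs_le] at ht
  rw [hφ, show (1:ℝ) + t = 2 - (1 - t) by ring]
  exact phi_bound_s (by linarith) (by linarith)

lemma rpow_split {u lam : ℝ} (hu : 0 ≤ u) (hlam : 0 < lam) :
    u ^ ((3:ℝ)/4) ≤ lam ^ ((3:ℝ)/4) + u * lam ^ (-(1:ℝ)/4) := by
  rcases le_or_gt u lam with h | h
  · have h1 := Real.rpow_le_rpow hu h (by norm_num : (0:ℝ) ≤ 3/4)
    have h2 : (0:ℝ) ≤ u * lam ^ (-(1:ℝ)/4) :=
      mul_nonneg hu (le_of_lt (Real.rpow_pos_of_pos hlam _))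
    linarith
  · have hu0 : 0 < u := lt_trans hlam h
    have h1 : u ^ ((3:ℝ)/4) = u * u ^ (-(1:ℝ)/4) := by
      rw [show u * u ^ (-(1:ℝ)/4) = u ^ (1:ℝ) * u ^ (-(1:ℝ)/4) by rw [Real.rpow_one],
        ← Real.rpow_add hu0]
      norm_num
    have h2 : u ^ (-(1:ℝ)/4) ≤ lam ^ (-(1:ℝ)/4) :=
      Real.rpow_le_rpow_of_nonpos hlam h.le (by norm_num)
    have h3 : (0:ℝ) ≤ lam ^ ((3:ℝ)/4) := le_of_lt (Real.rpow_pos_of_pos hlam _)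
    nlinarith [mul_le_mul_of_nonneg_left h2 hu]

lemma tail_deriv_bound {g g₁ : ℝ → ℝ} (hg : Antitone g) (hg0 : ∀ x, 0 ≤ g x)
    (hderiv : ∀ᵐ x : ℝ, HasDerivAt g (g₁ x) x) (T : ℝ)
    (hfin : ∫⁻ x in Set.Ioi T, ENNReal.ofReal (g x) ≠ ⊤) :
    ∫⁻ x in Set.Ioi T, ENNReal.ofReal (-(g₁ x)) ≤ ENNReal.ofReal (g T) := by
  have hgm : Measurable g := hg.measurable
  set F : ℝ → ℝ≥0∞ := fun x => ENNReal.ofReal (g x) with hF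
  have hFm : Measurable F := ENNReal.measurable_ofReal.comp hgm
  set u : ℕ → ℝ → ℝ≥0∞ :=
    fun n x => ENNReal.ofReal ((g x - g (x + 1/(n+1))) * (n+1)) with hu
  have hum : ∀ n, Measurable (u n) := by
    intro n
    apply ENNReal.measurable_ofReal.comp
    exact ((hgm.sub (hgm.comp (measurable_add_const _))).mul measurable_const)
  -- a.e. convergence
  have hconv : ∀ᵐ x : ℝ, Filter.Tendsto (fun n : ℕ => u n x) Filter.atTop
      (nhds (ENNReal.ofReal (-(g₁ x)))) := by
    filter_upwards [hderiv] with x hx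
    have hslope := hasDerivAt_iff_tendsto_slope.1 hx
    have hn0 : ∀ n : ℕ, (0:ℝ) < 1/(n+1) := by
      intro n; positivity
    have hseq : Filter.Tendsto (fun n : ℕ => x + 1/(n+1 : ℝ)) Filter.atTop (nhdsWithin x {x}ᶜ) := by
      apply tendsto_nhdsWithin_of_tendsto_nhds_of_eventually_within
      · have : Filter.Tendsto (fun n : ℕ => 1/(n+1 : ℝ)) Filter.atTop (nhds 0) :=
          tendsto_one_div_add_atTop_nhds_zero_nat
        have h2 := tendsto_const_nhds.add this (f := fun _ : ℕ => x) (x := Filter.atTop)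
        simpa using h2
      · exact Filter.Eventually.of_forall fun n => by
          simp only [Set.mem_compl_iff, Set.mem_singleton_iff]
          nlinarith [hn0 n]
    have hcomp := hslope.comp hseq
    have heq : ∀ n : ℕ, (g x - g (x + 1/(n+1))) * (n+1) = -(slope g x (x + 1/(n+1))) := by
      intro n
      rw [slope_def_field]
      field_simp
      ring
    have htend : Filter.Tendsto (fun n : ℕ => (g x - g (x + 1/(n+1))) * (n+1 : ℝ))
        Filter.atTop (nhds (-(g₁ x))) := by
      simp only [heq]
      exact hcomp.neg
    exact (ENNReal.continuous_ofReal.tendsto _).comp htend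
  -- per-n bound
  have hb : ∀ n : ℕ, (∫⁻ x in Set.Ioi T, u n x) ≤ ENNReal.ofReal (g T) := by
    intro n
    set h : ℝ := 1/(n+1) with hh
    have hhpos : (0:ℝ) < h := by positivity
    have hkey : ∀ x, u n x = (F x - F (x + h)) * ENNReal.ofReal (n+1) := by
      intro x
      show ENNReal.ofReal ((g x - g (x + 1/(n+1))) * (n+1)) = _
      rw [← hh]
      rw [ENNReal.ofReal_mul (by
        have h1 := hg (by linarith : x ≤ x + h)
        linarith)]
      rw [ENNReal.ofReal_sub _ (hg0 _)]
    have hFmh : Measurable (fun x => F (x + h)) := hFm.comp (measurable_add_const h)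
    have htrans : (∫⁻ x in Set.Ioi T, F (x + h)) = ∫⁻ y in Set.Ioi (T + h), F y := by
      have hpre : (fun x => x + h) ⁻¹' (Set.Ioi (T + h)) = Set.Ioi T := by
        ext x; simp [Set.mem_Ioi]
      rw [← hpre]
      exact (measurePreserving_add_right volume h).setLIntegral_comp_preimage_emb
        (measurableEmbedding_addRight h) F (Set.Ioi (T + h))
    have hsplit : (∫⁻ x in Set.Ioi T, F x)
        = (∫⁻ x in Set.Ioc T (T+h), F x) + ∫⁻ x in Set.Ioi (T+h), F x := by
      rw [← lintegral_union measurableSet_Ioi (Set.Ioc_disjoint_Ioi le_rfl),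
        Set.Ioc_union_Ioi_eq_Ioi (by linarith)]
    have hfin2 : (∫⁻ x in Set.Ioi T, F (x + h)) ≠ ⊤ := by
      rw [htrans]
      refine ne_top_of_le_ne_top hfin ?_
      rw [hsplit]
      exact le_add_self
    have hle : (fun x => F (x + h)) ≤ᵐ[volume.restrict (Set.Ioi T)] F :=
      Filter.Eventually.of_forall fun x =>
        ENNReal.ofReal_le_ofReal (hg (by linarith : x ≤ x + h))
    have hsub : (∫⁻ x in Set.Ioi T, (F x - F (x + h)))
        = (∫⁻ x in Set.Ioi T, F x) - ∫⁻ x in Set.Ioi T, F (x + h) :=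
      lintegral_sub hFmh hfin2 hle
    have hIocbound : (∫⁻ x in Set.Ioc T (T+h), F x) ≤ ENNReal.ofReal (g T) * ENNReal.ofReal h := by
      calc (∫⁻ x in Set.Ioc T (T+h), F x) ≤ ∫⁻ _x in Set.Ioc T (T+h), ENNReal.ofReal (g T) := by
            apply setLIntegral_mono measurable_const
            intro x hx
            exact ENNReal.ofReal_le_ofReal (hg (le_of_lt hx.1))
        _ = ENNReal.ofReal (g T) * volume (Set.Ioc T (T+h)) := setLIntegral_const _ _
        _ = ENNReal.ofReal (g T) * ENNReal.ofReal h := by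
            rw [Real.volume_Ioc]; ring_nf
    have hdiff : (∫⁻ x in Set.Ioi T, F x) - (∫⁻ x in Set.Ioi T, F (x + h))
        ≤ ENNReal.ofReal (g T) * ENNReal.ofReal h := by
      rw [htrans, hsplit]
      rw [ENNReal.add_sub_cancel_right (by
        refine ne_top_of_le_ne_top hfin ?_
        rw [hsplit]; exact le_add_self)]
      exact hIocbound
    calc (∫⁻ x in Set.Ioi T, u n x)
        = (∫⁻ x in Set.Ioi T, (F x - F (x + h)) * ENNReal.ofReal (n+1)) := by
          apply lintegral_congr; intro x; exact hkey x
      _ = ((∫⁻ x in Set.Ioi T, (F x - F (x + h)))) * ENNReal.ofReal (n+1) :=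
          lintegral_mul_const' _ _ ENNReal.ofReal_ne_top
      _ ≤ (ENNReal.ofReal (g T) * ENNReal.ofReal h) * ENNReal.ofReal (n+1) := by
          rw [hsub]
          exact mul_le_mul_left hdiff _
      _ = ENNReal.ofReal (g T) * ENNReal.ofReal (h * (n+1)) := by
          rw [ENNReal.ofReal_mul (le_of_lt hhpos), mul_assoc]
      _ = ENNReal.ofReal (g T) := by
          rw [hh]
          rw [show (1/((n:ℝ)+1)) * ((n:ℝ)+1) = 1 by
            field_simp]
          simp
  calc (∫⁻ x in Set.Ioi T, ENNReal.ofReal (-(g₁ x)))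
      = ∫⁻ x in Set.Ioi T, Filter.liminf (fun n => u n x) Filter.atTop := by
        apply lintegral_congr_ae
        filter_upwards [ae_restrict_of_ae hconv] with x hx
        exact (hx.liminf_eq).symm
    _ ≤ Filter.liminf (fun n => ∫⁻ x in Set.Ioi T, u n x) Filter.atTop :=
        lintegral_liminf_le hum
    _ ≤ ENNReal.ofReal (g T) := by
        refine le_trans (Filter.liminf_le_liminf (Filter.Eventually.of_forall hb)) ?_
        simp [Filter.liminf_const]

lemma abs_deriv_le_one {f : ℝ → ℝ} (hf : LipschitzWith 1 f) {x v : ℝ}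
    (h : HasDerivAt f v x) : |v| ≤ 1 := by
  have hs := (hasDerivAt_iff_tendsto_slope.1 h).abs
  refine le_of_tendsto hs ?_
  filter_upwards [self_mem_nhdsWithin] with y hy
  have hxy : y ≠ x := hy
  rw [slope_def_field]
  rw [abs_div]
  rw [div_le_one (abs_pos.2 (sub_ne_zero.2 hxy))]
  have := hf.dist_le_mul y x
  simpa [Real.dist_eq] using this

lemma g_antitone {f : ℝ → ℝ} (hf : LipschitzWith 1 f) : Antitone (fun x => f x - x) := by
  intro a b hab
  have := hf.dist_le_mul b a
  simp only [Real.dist_eq, one_mul] at this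
  have h1 : |f b - f a| ≤ |b - a| := by simpa using this
  rw [abs_le] at h1
  have h2 : |b - a| = b - a := abs_of_nonneg (by linarith)
  simp only []
  nlinarith [le_abs_self (f b - f a), h1.2]

-- block bound: assume the tail-integral facts as hypotheses
lemma block_bound {φ d : ℝ → ℝ}
    (hφ4 : ∀ᵐ x : ℝ, φ (d x) ≤ 4 * (1 - d x) ^ ((3:ℝ)/4) ∧ d x ≤ 1)
    (hdm : Measurable d)
    (htail : ∀ a : ℝ, 1 ≤ a → (∫⁻ x in Set.Ioi a, ENNReal.ofReal (1 - d x)) ≤ ENNReal.ofReal a⁻¹)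
    {a : ℝ} (ha : 1 ≤ a) :
    (∫⁻ x in Set.Ioc a (2*a), ENNReal.ofReal (φ (d x)))
      ≤ ENNReal.ofReal (8 * a ^ (-(1:ℝ)/2)) := by
  have ha0 : (0:ℝ) < a := by linarith
  have hlam : (0:ℝ) < a ^ (-(2:ℝ)) := Real.rpow_pos_of_pos ha0 _
  set c1 : ℝ := 4 * a ^ (-(3:ℝ)/2) with hc1
  set c2 : ℝ := 4 * a ^ ((1:ℝ)/2) with hc2
  have hc1p : 0 < c1 := by positivity
  have hc2p : 0 < c2 := by positivity
  have hlam34 : (a ^ (-(2:ℝ))) ^ ((3:ℝ)/4) = a ^ (-(3:ℝ)/2) := by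
    rw [← Real.rpow_mul (le_of_lt ha0)]; norm_num
  have hlam14 : (a ^ (-(2:ℝ))) ^ (-(1:ℝ)/4) = a ^ ((1:ℝ)/2) := by
    rw [← Real.rpow_mul (le_of_lt ha0)]; norm_num
  have hpt : ∀ᵐ x : ℝ, ENNReal.ofReal (φ (d x))
      ≤ ENNReal.ofReal c1 + ENNReal.ofReal (1 - d x) * ENNReal.ofReal c2 := by
    filter_upwards [hφ4] with x hx
    have hd1 : 0 ≤ 1 - d x := by linarith [hx.2]
    have hsp := rpow_split hd1 hlam
    rw [hlam34, hlam14] at hsp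
    have hreal : φ (d x) ≤ c1 + (1 - d x) * c2 := by
      rw [hc1, hc2]; nlinarith [hx.1]
    calc ENNReal.ofReal (φ (d x)) ≤ ENNReal.ofReal (c1 + (1 - d x) * c2) :=
          ENNReal.ofReal_le_ofReal hreal
      _ = ENNReal.ofReal c1 + ENNReal.ofReal (1 - d x) * ENNReal.ofReal c2 := by
          rw [ENNReal.ofReal_add (le_of_lt hc1p) (mul_nonneg hd1 (le_of_lt hc2p)),
            ENNReal.ofReal_mul hd1]
  calc (∫⁻ x in Set.Ioc a (2*a), ENNReal.ofReal (φ (d x)))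
      ≤ ∫⁻ x in Set.Ioc a (2*a),
          (ENNReal.ofReal c1 + ENNReal.ofReal (1 - d x) * ENNReal.ofReal c2) :=
        lintegral_mono_ae (ae_restrict_of_ae hpt)
    _ = ENNReal.ofReal c1 * volume (Set.Ioc a (2*a))
        + (∫⁻ x in Set.Ioc a (2*a), ENNReal.ofReal (1 - d x)) * ENNReal.ofReal c2 := by
        rw [lintegral_add_left measurable_const, setLIntegral_const,
          lintegral_mul_const' _ _ ENNReal.ofReal_ne_top]
    _ ≤ ENNReal.ofReal c1 * ENNReal.ofReal a + ENNReal.ofReal a⁻¹ * ENNReal.ofReal c2 := by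
        gcongr
        · rw [Real.volume_Ioc, show 2*a - a = a by ring]
        · calc (∫⁻ x in Set.Ioc a (2*a), ENNReal.ofReal (1 - d x))
              ≤ ∫⁻ x in Set.Ioi a, ENNReal.ofReal (1 - d x) :=
              lintegral_mono_set Set.Ioc_subset_Ioi_self
            _ ≤ ENNReal.ofReal a⁻¹ := htail a ha
    _ = ENNReal.ofReal (c1 * a + a⁻¹ * c2) := by
        rw [← ENNReal.ofReal_mul (le_of_lt hc1p), ← ENNReal.ofReal_mul (by positivity),
          ← ENNReal.ofReal_add (by positivity) (by positivity)]
    _ = ENNReal.ofReal (8 * a ^ (-(1:ℝ)/2)) := by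
        congr 1
        rw [hc1, hc2]
        have h1 : a ^ (-(3:ℝ)/2) * a = a ^ (-(1:ℝ)/2) := by
          nth_rewrite 2 [show a = a ^ (1:ℝ) by rw [Real.rpow_one]]
          rw [← Real.rpow_add ha0]; norm_num
        have h2 : a⁻¹ * a ^ ((1:ℝ)/2) = a ^ (-(1:ℝ)/2) := by
          rw [show a⁻¹ = a ^ (-(1:ℝ)) by rw [Real.rpow_neg_one], ← Real.rpow_add ha0]
          norm_num
        calc 4 * a ^ (-(3:ℝ)/2) * a + a⁻¹ * (4 * a ^ ((1:ℝ)/2))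
            = 4 * (a ^ (-(3:ℝ)/2) * a) + 4 * (a⁻¹ * a ^ ((1:ℝ)/2)) := by ring
          _ = 8 * a ^ (-(1:ℝ)/2) := by rw [h1, h2]; ring
lemma cover_Ioi {A : ℝ} (hA : 0 < A) :
    Set.Ioi A ⊆ ⋃ k : ℕ, Set.Ioc (A * 2^k) (A * 2^(k+1)) := by
  intro x hx
  have hx' : A < x := hx
  have hne : ∃ n : ℕ, x ≤ A * 2^(n+1) := by
    obtain ⟨m, hm⟩ := pow_unbounded_of_one_lt (x / A) (by norm_num : (1:ℝ) < 2)
    exact ⟨m, by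
      rw [div_lt_iff₀ hA] at hm
      have h2 : (2:ℝ)^m ≤ 2^(m+1) := by
        apply pow_le_pow_right₀ (by norm_num)
        omega
      nlinarith⟩
  classical
  let k := Nat.find hne
  have hk : x ≤ A * 2^(k+1) := Nat.find_spec hne
  have hlow : A * 2^k < x := by
    rcases Nat.eq_zero_or_pos k with h0 | h0
    · rw [h0]; simpa using hx'
    · obtain ⟨j, hj⟩ : ∃ j, k = j + 1 := ⟨k - 1, by omega⟩
      have hmin := Nat.find_min hne (m := j) (by omega)
      push_neg at hmin
      rw [hj]
      exact hmin
  exact Set.mem_iUnion.2 ⟨k, hlow, hk⟩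

lemma geom_const_le : (1 - ENNReal.ofReal ((2:ℝ) ^ (-(1:ℝ)/2)))⁻¹ ≤ 4 := by
  have hc : ((2:ℝ) ^ (-(1:ℝ)/2)) ≤ 3/4 := by
    by_contra h
    push_neg at h
    have h2 : ((3:ℝ)/4) ^ (2:ℕ) < ((2:ℝ) ^ (-(1:ℝ)/2)) ^ (2:ℕ) :=
      pow_lt_pow_left₀ h (by norm_num) (by norm_num)
    rw [← Real.rpow_natCast ((2:ℝ) ^ (-(1:ℝ)/2)) 2, ← Real.rpow_mul (by norm_num)] at h2
    norm_num at h2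
  have h1 : ENNReal.ofReal ((2:ℝ) ^ (-(1:ℝ)/2)) ≤ ENNReal.ofReal (3/4) :=
    ENNReal.ofReal_le_ofReal hc
  have h2 : ENNReal.ofReal ((1:ℝ)/4) ≤ 1 - ENNReal.ofReal ((2:ℝ) ^ (-(1:ℝ)/2)) := by
    have e1 : (1:ℝ≥0∞) = ENNReal.ofReal 1 := by simp
    calc ENNReal.ofReal ((1:ℝ)/4) = ENNReal.ofReal 1 - ENNReal.ofReal (3/4) := by
          rw [← ENNReal.ofReal_sub _ (by norm_num : (0:ℝ) ≤ 3/4)]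
          norm_num
      _ ≤ 1 - ENNReal.ofReal ((2:ℝ) ^ (-(1:ℝ)/2)) := by
          rw [← e1]
          exact tsub_le_tsub_left h1 1
  calc (1 - ENNReal.ofReal ((2:ℝ) ^ (-(1:ℝ)/2)))⁻¹ ≤ (ENNReal.ofReal ((1:ℝ)/4))⁻¹ :=
        ENNReal.inv_le_inv' h2
    _ = 4 := by
        rw [show ((1:ℝ)/4) = ((4:ℝ))⁻¹ by norm_num, ENNReal.ofReal_inv_of_pos (by norm_num)]
        rw [inv_inv]
        norm_num
lemma mul_log_le_log2 {y : ℝ} (hy0 : 0 ≤ y) (hy2 : y ≤ 2) : y * Real.log y ≤ y * Real.log 2 := by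
  rcases hy0.eq_or_lt with h | h
  · simp [← h]
  · exact mul_le_mul_of_nonneg_left (Real.log_le_log h hy2) hy0
    
lemma phi_nonneg {φ : ℝ → ℝ}
    (hφ : ∀ x, φ x = Real.log 2 -
      (1 / 2) * ((1 + x) * Real.log (1 + x) + (1 - x) * Real.log (1 - x)))
    {t : ℝ} (ht : |t| ≤ 1) : 0 ≤ φ t := by
  rw [hφ]
  rw [abs_le] at ht
  have h1 := mul_log_le_log2 (by linarith : (0:ℝ) ≤ 1 + t) (by linarith)
  have h2 := mul_log_le_log2 (by linarith : (0:ℝ) ≤ 1 - t) (by linarith)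
  nlinarith

lemma phi_le_log2 {φ : ℝ → ℝ}
    (hφ : ∀ x, φ x = Real.log 2 -
      (1 / 2) * ((1 + x) * Real.log (1 + x) + (1 - x) * Real.log (1 - x)))
    {t : ℝ} (ht : |t| ≤ 1) : φ t ≤ Real.log 2 := by
  rw [hφ]
  rw [abs_le] at ht
  have h1 := mul_log_ge (by linarith : (0:ℝ) ≤ 1 + t)
  have h2 := mul_log_ge (by linarith : (0:ℝ) ≤ 1 - t)
  nlinarith

lemma phi_even {φ : ℝ → ℝ}
    (hφ : ∀ x, φ x = Real.log 2 -
      (1 / 2) * ((1 + x) * Real.log (1 + x) + (1 - x) * Real.log (1 - x)))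
    (t : ℝ) : φ (-t) = φ t := by
  rw [hφ, hφ, show (1:ℝ) + -t = 1 - t by ring, show (1:ℝ) - -t = 1 + t by ring]
  ring
lemma tail_pos {φ f d : ℝ → ℝ}
    (hφ : ∀ x, φ x = Real.log 2 -
      (1 / 2) * ((1 + x) * Real.log (1 + x) + (1 - x) * Real.log (1 - x)))
    (hf : LipschitzWith 1 f) (habs : ∀ x, |x| ≤ f x)
    (hint : (∫⁻ x : ℝ, ENNReal.ofReal (f x - |x|)) ≤ 1)
    (hd : ∀ᵐ x : ℝ, HasDerivAt f (d x) x) (hdm : Measurable d)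
    {A : ℝ} (hA : 1 ≤ A) :
    (∫⁻ x in Set.Ioi A, ENNReal.ofReal (φ (d x)))
      ≤ ENNReal.ofReal (32 * A ^ (-(1:ℝ)/2)) := by
  have hA0 : (0:ℝ) < A := by linarith
  have hd1 : ∀ᵐ x : ℝ, |d x| ≤ 1 := hd.mono fun x hx => abs_deriv_le_one hf hx
  have hφ4 : ∀ᵐ x : ℝ, φ (d x) ≤ 4 * (1 - d x) ^ ((3:ℝ)/4) ∧ d x ≤ 1 :=
    hd1.mono fun x hx => ⟨phi_key hφ hx, (abs_le.1 hx).2⟩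
  have hganti : Antitone (fun x => f x - x) := g_antitone hf
  have hg0 : ∀ x, 0 ≤ f x - x := fun x => by
    have h1 := habs x; have h2 := le_abs_self x; linarith
  have hgd : ∀ᵐ x : ℝ, HasDerivAt (fun y => f y - y) (d x - 1) x :=
    hd.mono fun x hx => hx.sub (hasDerivAt_id x)
  have hmeas2 : Measurable fun x : ℝ => ENNReal.ofReal (f x - |x|) :=
    (hf.continuous.measurable.sub continuous_abs.measurable).ennreal_ofReal
  have hfin : ∀ T : ℝ, 0 < T → (∫⁻ x in Set.Ioi T, ENNReal.ofReal (f x - x)) ≤ 1 := by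
    intro T hT
    have heq : ∀ᵐ x : ℝ, x ∈ Set.Ioi T →
        ENNReal.ofReal (f x - x) = ENNReal.ofReal (f x - |x|) :=
      Filter.Eventually.of_forall fun x hx => by rw [abs_of_pos (lt_trans hT hx)]
    rw [setLIntegral_congr_fun_ae measurableSet_Ioi heq]
    exact le_trans (setLIntegral_le_lintegral _ _) hint
  have hga : ∀ a : ℝ, 1 ≤ a → f a - a ≤ a⁻¹ := by
    intro a ha
    have ha0 : (0:ℝ) < a := by linarith
    have hmono : ∀ x ∈ Set.Ioc (0:ℝ) a,
        ENNReal.ofReal (f a - a) ≤ ENNReal.ofReal (f x - |x|) := fun x hx => by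
      have h1 : f a - a ≤ f x - x := hganti hx.2
      rw [abs_of_pos hx.1]
      exact ENNReal.ofReal_le_ofReal h1
    have h2 : ENNReal.ofReal (f a - a) * ENNReal.ofReal a ≤ 1 := by
      calc ENNReal.ofReal (f a - a) * ENNReal.ofReal a
          = ENNReal.ofReal (f a - a) * volume (Set.Ioc 0 a) := by
            rw [Real.volume_Ioc, sub_zero]
        _ = ∫⁻ _x in Set.Ioc (0:ℝ) a, ENNReal.ofReal (f a - a) :=
            (setLIntegral_const _ _).symm
        _ ≤ ∫⁻ x in Set.Ioc (0:ℝ) a, ENNReal.ofReal (f x - |x|) :=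
            setLIntegral_mono hmeas2 hmono
        _ ≤ 1 := le_trans (setLIntegral_le_lintegral _ _) hint
    rw [← ENNReal.ofReal_mul (hg0 a)] at h2
    have h3 : (f a - a) * a ≤ 1 := ENNReal.ofReal_le_one.1 h2
    rw [← one_div, le_div_iff₀ ha0]
    exact h3
  have htail : ∀ a : ℝ, 1 ≤ a →
      (∫⁻ x in Set.Ioi a, ENNReal.ofReal (1 - d x)) ≤ ENNReal.ofReal a⁻¹ := by
    intro a ha
    have ha0 : (0:ℝ) < a := by linarith
    have h1 := tail_deriv_bound hganti hg0 hgd a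
      (ne_top_of_le_ne_top ENNReal.one_ne_top (hfin a ha0))
    simp only [neg_sub] at h1
    exact le_trans h1 (ENNReal.ofReal_le_ofReal (hga a ha))
  calc (∫⁻ x in Set.Ioi A, ENNReal.ofReal (φ (d x)))
      ≤ ∫⁻ x in ⋃ k : ℕ, Set.Ioc (A*2^k) (A*2^(k+1)), ENNReal.ofReal (φ (d x)) :=
        lintegral_mono_set (cover_Ioi hA0)
    _ ≤ ∑' k : ℕ, ∫⁻ x in Set.Ioc (A*2^k) (A*2^(k+1)), ENNReal.ofReal (φ (d x)) :=
        lintegral_iUnion_le _ _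
    _ ≤ ∑' k : ℕ, ENNReal.ofReal (8 * A^(-(1:ℝ)/2)) * (ENNReal.ofReal ((2:ℝ)^(-(1:ℝ)/2)))^k := by
        apply ENNReal.tsum_le_tsum
        intro k
        have h2k : (1:ℝ) ≤ 2^k := one_le_pow₀ (by norm_num)
        have hak : 1 ≤ A * 2^k := by nlinarith
        have hb := block_bound hφ4 hdm htail hak
        rw [show A * 2^(k+1) = 2*(A*2^k) by ring]
        refine le_trans hb ?_
        have he : (A * 2^k : ℝ) ^ (-(1:ℝ)/2) = A ^ (-(1:ℝ)/2) * ((2:ℝ) ^ (-(1:ℝ)/2))^k := by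
          rw [Real.mul_rpow (by positivity) (by positivity)]
          congr 1
          rw [← Real.rpow_natCast (2:ℝ) k, ← Real.rpow_natCast ((2:ℝ) ^ (-(1:ℝ)/2)) k,
            ← Real.rpow_mul (by norm_num), ← Real.rpow_mul (by norm_num)]
          congr 1
          ring
        rw [he, show 8 * (A ^ (-(1:ℝ)/2) * ((2:ℝ) ^ (-(1:ℝ)/2))^k)
            = (8 * A ^ (-(1:ℝ)/2)) * ((2:ℝ) ^ (-(1:ℝ)/2))^k by ring,
          ENNReal.ofReal_mul (by positivity), ENNReal.ofReal_pow (by positivity)]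
    _ = ENNReal.ofReal (8 * A^(-(1:ℝ)/2)) * (1 - ENNReal.ofReal ((2:ℝ)^(-(1:ℝ)/2)))⁻¹ := by
        rw [ENNReal.tsum_mul_left, ENNReal.tsum_geometric]
    _ ≤ ENNReal.ofReal (8 * A^(-(1:ℝ)/2)) * 4 := mul_le_mul_right geom_const_le _
    _ = ENNReal.ofReal (32 * A^(-(1:ℝ)/2)) := by
        rw [show (4:ℝ≥0∞) = ENNReal.ofReal 4 by norm_num,
          ← ENNReal.ofReal_mul (by positivity)]
        congr 1
        ring

lemma ae_comp_neg {p : ℝ → Prop} (h : ∀ᵐ x : ℝ, p x) : ∀ᵐ x : ℝ, p (-x) :=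
  (Measure.measurePreserving_neg (volume : Measure ℝ)).quasiMeasurePreserving.ae h

lemma setLIntegral_neg (G : ℝ → ℝ≥0∞) (hG : Measurable G) (A : ℝ) :
    (∫⁻ x in Set.Ioi A, G (-x)) = ∫⁻ y in Set.Iio (-A), G y := by
  have hpre : (fun x : ℝ => -x) ⁻¹' (Set.Iio (-A)) = Set.Ioi A := by
    ext x; simp only [Set.mem_preimage, Set.mem_Iio, Set.mem_Ioi]; constructor <;> intro <;> linarith
  rw [← hpre]
  exact (Measure.measurePreserving_neg volume).setLIntegral_comp_preimage_emb
    (MeasurableEquiv.neg ℝ).measurableEmbedding G (Set.Iio (-A))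


theorem stmt17 (φ : ℝ → ℝ)
    (hφ : ∀ x, φ x = Real.log 2 -
      (1 / 2) * ((1 + x) * Real.log (1 + x) + (1 - x) * Real.log (1 - x))) :
    ∀ ε > (0 : ℝ), ∃ A > (0 : ℝ),
      ∀ f f' : ℝ → ℝ, LipschitzWith 1 f → (∀ x, |x| ≤ f x) →
        (∫⁻ x : ℝ, ENNReal.ofReal (f x - |x|) ≤ 1) →
        (∀ᵐ x : ℝ, HasDerivAt f (f' x) x) →
        Integrable (fun x => φ (f' x)) ∧
        (∫ x in (Set.Icc (-A) A)ᶜ, φ (f' x)) < ε := by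
  -- continuity of φ
  have hφc : Continuous φ := by
    have hPhi : φ = fun x => Real.log 2 -
        (1 / 2) * ((1 + x) * Real.log (1 + x) + (1 - x) * Real.log (1 - x)) := funext hφ
    rw [hPhi]
    have h1 : Continuous fun x : ℝ => (1 + x) * Real.log (1 + x) :=
      Real.continuous_mul_log.comp (continuous_const.add continuous_id)
    have h2 : Continuous fun x : ℝ => (1 - x) * Real.log (1 - x) :=
      Real.continuous_mul_log.comp (continuous_const.sub continuous_id)
    continuity
  intro ε hε
  set B : ℝ := 1 + 64 / ε with hB
  have hBpos : 0 < B := by positivity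
  refine ⟨B ^ 2, by positivity, ?_⟩
  intro f f' hf habs hint hderiv
  set A : ℝ := B ^ 2 with hA
  have hB1 : (1:ℝ) ≤ B := by
    rw [hB]
    have h64 : (0:ℝ) < 64 / ε := by positivity
    linarith
  have hA1 : (1:ℝ) ≤ A := by nlinarith
  have hA0 : (0:ℝ) < A := by linarith
  set d : ℝ → ℝ := deriv f with hd_def
  have hdm : Measurable d := measurable_deriv f
  have hfd : ∀ᵐ x : ℝ, f' x = d x := hderiv.mono fun x hx => (hx.deriv).symm
  have hd : ∀ᵐ x : ℝ, HasDerivAt f (d x) x := hderiv.mono fun x hx => by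
    rw [hd_def]; rw [hx.deriv]; exact hx
  have hd1 : ∀ᵐ x : ℝ, |d x| ≤ 1 := hd.mono fun x hx => abs_deriv_le_one hf hx
  -- the reflected function
  have hfneg : LipschitzWith 1 (fun x => f (-x)) := by
    refine LipschitzWith.of_dist_le_mul fun x y => ?_
    have := hf.dist_le_mul (-x) (-y)
    simpa [Real.dist_eq, abs_sub_comm, neg_add_eq_sub] using this
  have habsneg : ∀ x, |x| ≤ f (-x) := fun x => by rw [← abs_neg]; exact habs (-x)
  have hintneg : (∫⁻ x : ℝ, ENNReal.ofReal (f (-x) - |x|)) ≤ 1 := by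
    have hmeas : Measurable fun y : ℝ => ENNReal.ofReal (f y - |y|) :=
      (hf.continuous.measurable.sub continuous_abs.measurable).ennreal_ofReal
    have := (Measure.measurePreserving_neg (volume : Measure ℝ)).lintegral_comp hmeas
    calc (∫⁻ x : ℝ, ENNReal.ofReal (f (-x) - |x|))
        = ∫⁻ x : ℝ, ENNReal.ofReal (f (-x) - |(-x)|) := by
          apply lintegral_congr; intro x; rw [abs_neg]
      _ = ∫⁻ y : ℝ, ENNReal.ofReal (f y - |y|) := this
      _ ≤ 1 := hint
  set dneg : ℝ → ℝ := fun x => -(d (-x)) with hdneg_def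
  have hdnegm : Measurable dneg := (hdm.comp measurable_neg).neg
  have hdneg : ∀ᵐ x : ℝ, HasDerivAt (fun y => f (-y)) (dneg x) x := by
    filter_upwards [ae_comp_neg hd] with x hx
    have hneg : HasDerivAt (fun y : ℝ => -y) (-1) x := (hasDerivAt_id x).neg
    have := HasDerivAt.comp x hx hneg
    rw [mul_neg_one] at this
    exact this
  -- tail bounds
  have hpos := tail_pos hφ hf habs hint hd hdm hA1
  have hnegtail := tail_pos hφ hfneg habsneg hintneg hdneg hdnegm hA1
  have hnegIio : (∫⁻ x in Set.Iio (-A), ENNReal.ofReal (φ (d x)))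
      ≤ ENNReal.ofReal (32 * A ^ (-(1:ℝ)/2)) := by
    have heq : (∫⁻ x in Set.Ioi A, ENNReal.ofReal (φ (dneg x)))
        = ∫⁻ x in Set.Iio (-A), ENNReal.ofReal (φ (d x)) := by
      have h1 : ∀ x, ENNReal.ofReal (φ (dneg x)) = ENNReal.ofReal (φ (d (-x))) := fun x => by
        rw [hdneg_def]; simp only []; rw [phi_even hφ]
      calc (∫⁻ x in Set.Ioi A, ENNReal.ofReal (φ (dneg x)))
          = ∫⁻ x in Set.Ioi A, ENNReal.ofReal (φ (d (-x))) := by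
            apply lintegral_congr; exact h1
        _ = ∫⁻ x in Set.Iio (-A), ENNReal.ofReal (φ (d x)) :=
            setLIntegral_neg _ ((hφc.measurable.comp hdm).ennreal_ofReal) A
    rw [← heq]
    exact hnegtail
  have hcompl : (Set.Icc (-A) A)ᶜ = Set.Iio (-A) ∪ Set.Ioi A := by
    ext x
    simp only [Set.mem_compl_iff, Set.mem_Icc, Set.mem_union, Set.mem_Iio, Set.mem_Ioi,
      not_and_or, not_le]
  have htailsum : (∫⁻ x in (Set.Icc (-A) A)ᶜ, ENNReal.ofReal (φ (d x)))
      ≤ ENNReal.ofReal (64 * A ^ (-(1:ℝ)/2)) := by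
    rw [hcompl]
    calc (∫⁻ x in Set.Iio (-A) ∪ Set.Ioi A, ENNReal.ofReal (φ (d x)))
        ≤ (∫⁻ x in Set.Iio (-A), ENNReal.ofReal (φ (d x)))
          + ∫⁻ x in Set.Ioi A, ENNReal.ofReal (φ (d x)) := lintegral_union_le _ _ _
      _ ≤ ENNReal.ofReal (32 * A ^ (-(1:ℝ)/2)) + ENNReal.ofReal (32 * A ^ (-(1:ℝ)/2)) :=
          add_le_add hnegIio hpos
      _ = ENNReal.ofReal (64 * A ^ (-(1:ℝ)/2)) := by
          rw [← ENNReal.ofReal_add (by positivity) (by positivity)]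
          congr 1; ring
  -- global lintegral finiteness (used for integrability), with A = 1 tails
  have honetails : (∫⁻ x in (Set.Icc (-(1:ℝ)) 1)ᶜ, ENNReal.ofReal (φ (d x)))
      ≤ ENNReal.ofReal (64 * (1:ℝ) ^ (-(1:ℝ)/2)) := by
    have h1 := tail_pos hφ hf habs hint hd hdm (le_refl (1:ℝ))
    have h2 := tail_pos hφ hfneg habsneg hintneg hdneg hdnegm (le_refl (1:ℝ))
    have h2' : (∫⁻ x in Set.Iio (-(1:ℝ)), ENNReal.ofReal (φ (d x)))
        ≤ ENNReal.ofReal (32 * (1:ℝ) ^ (-(1:ℝ)/2)) := by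
      have heq : (∫⁻ x in Set.Ioi (1:ℝ), ENNReal.ofReal (φ (dneg x)))
          = ∫⁻ x in Set.Iio (-(1:ℝ)), ENNReal.ofReal (φ (d x)) := by
        have h1' : ∀ x, ENNReal.ofReal (φ (dneg x)) = ENNReal.ofReal (φ (d (-x))) := fun x => by
          rw [hdneg_def]; simp only []; rw [phi_even hφ]
        calc (∫⁻ x in Set.Ioi (1:ℝ), ENNReal.ofReal (φ (dneg x)))
            = ∫⁻ x in Set.Ioi (1:ℝ), ENNReal.ofReal (φ (d (-x))) := by
              apply lintegral_congr; exact h1'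
          _ = ∫⁻ x in Set.Iio (-(1:ℝ)), ENNReal.ofReal (φ (d x)) :=
              setLIntegral_neg _ ((hφc.measurable.comp hdm).ennreal_ofReal) 1
      rw [← heq]; exact h2
    have hc : (Set.Icc (-(1:ℝ)) 1)ᶜ = Set.Iio (-(1:ℝ)) ∪ Set.Ioi 1 := by
      ext x
      simp only [Set.mem_compl_iff, Set.mem_Icc, Set.mem_union, Set.mem_Iio, Set.mem_Ioi,
        not_and_or, not_le]
    rw [hc]
    calc (∫⁻ x in Set.Iio (-(1:ℝ)) ∪ Set.Ioi 1, ENNReal.ofReal (φ (d x)))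
        ≤ (∫⁻ x in Set.Iio (-(1:ℝ)), ENNReal.ofReal (φ (d x)))
          + ∫⁻ x in Set.Ioi (1:ℝ), ENNReal.ofReal (φ (d x)) := lintegral_union_le _ _ _
      _ ≤ ENNReal.ofReal (32 * (1:ℝ) ^ (-(1:ℝ)/2)) + ENNReal.ofReal (32 * (1:ℝ) ^ (-(1:ℝ)/2)) :=
          add_le_add h2' h1
      _ = ENNReal.ofReal (64 * (1:ℝ) ^ (-(1:ℝ)/2)) := by
          rw [← ENNReal.ofReal_add (by positivity) (by positivity)]
          congr 1; ring
  have hglobfin : (∫⁻ x : ℝ, ENNReal.ofReal (φ (d x))) ≠ ⊤ := by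
    have hsplit : (∫⁻ x : ℝ, ENNReal.ofReal (φ (d x)))
        ≤ (∫⁻ x in Set.Icc (-(1:ℝ)) 1, ENNReal.ofReal (φ (d x)))
          + ∫⁻ x in (Set.Icc (-(1:ℝ)) 1)ᶜ, ENNReal.ofReal (φ (d x)) := by
      have := lintegral_union_le (μ := volume) (fun x => ENNReal.ofReal (φ (d x)))
        (Set.Icc (-(1:ℝ)) 1) ((Set.Icc (-(1:ℝ)) 1)ᶜ)
      refine le_trans ?_ this
      rw [Set.union_compl_self]
      exact le_of_eq (by rw [Measure.restrict_univ])
    have hIcc : (∫⁻ x in Set.Icc (-(1:ℝ)) 1, ENNReal.ofReal (φ (d x)))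
        ≤ ENNReal.ofReal (Real.log 2) * 2 := by
      calc (∫⁻ x in Set.Icc (-(1:ℝ)) 1, ENNReal.ofReal (φ (d x)))
          ≤ ∫⁻ _x in Set.Icc (-(1:ℝ)) 1, ENNReal.ofReal (Real.log 2) := by
            apply setLIntegral_mono_ae measurable_const.aemeasurable
            filter_upwards [hd1] with x hx
            intro _
            exact ENNReal.ofReal_le_ofReal (phi_le_log2 hφ hx)
        _ = ENNReal.ofReal (Real.log 2) * volume (Set.Icc (-(1:ℝ)) 1) := setLIntegral_const _ _
        _ = ENNReal.ofReal (Real.log 2) * 2 := by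
            rw [Real.volume_Icc]
            norm_num
    refine ne_top_of_le_ne_top ?_ (le_trans hsplit (add_le_add hIcc honetails))
    exact ENNReal.add_ne_top.2 ⟨ENNReal.mul_ne_top ENNReal.ofReal_ne_top (by norm_num),
      ENNReal.ofReal_ne_top⟩
  -- nonnegativity a.e.
  have hnn : ∀ᵐ x : ℝ, 0 ≤ φ (d x) := hd1.mono fun x hx => phi_nonneg hφ hx
  -- integrability
  have hInt_d : Integrable (fun x => φ (d x)) := by
    refine ⟨(hφc.measurable.comp hdm).aestronglyMeasurable, ?_⟩
    rw [hasFiniteIntegral_iff_norm]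
    have heq : (∫⁻ x : ℝ, ENNReal.ofReal ‖φ (d x)‖) = ∫⁻ x : ℝ, ENNReal.ofReal (φ (d x)) := by
      apply lintegral_congr_ae
      filter_upwards [hnn] with x hx
      rw [Real.norm_eq_abs, abs_of_nonneg hx]
    rw [heq]
    exact lt_of_le_of_ne le_top hglobfin
  have hInt : Integrable (fun x => φ (f' x)) :=
    hInt_d.congr (hfd.mono fun x hx => show φ (d x) = φ (f' x) by rw [hx])
  refine ⟨hInt, ?_⟩
  -- the tail integral
  have hcongr : (∫ x in (Set.Icc (-A) A)ᶜ, φ (f' x)) = ∫ x in (Set.Icc (-A) A)ᶜ, φ (d x) :=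
    integral_congr_ae (ae_restrict_of_ae (hfd.mono fun x hx => show φ (f' x) = φ (d x) by rw [hx]))
  rw [hcongr]
  have hrepr : (∫ x in (Set.Icc (-A) A)ᶜ, φ (d x))
      = (∫⁻ x in (Set.Icc (-A) A)ᶜ, ENNReal.ofReal (φ (d x))).toReal := by
    rw [integral_eq_lintegral_of_nonneg_ae (ae_restrict_of_ae hnn)
      (hφc.measurable.comp hdm).aestronglyMeasurable.restrict]
  rw [hrepr]
  have hfinal : (∫⁻ x in (Set.Icc (-A) A)ᶜ, ENNReal.ofReal (φ (d x))).toReal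
      ≤ 64 * A ^ (-(1:ℝ)/2) := by
    have h1 := ENNReal.toReal_mono ENNReal.ofReal_ne_top htailsum
    rwa [ENNReal.toReal_ofReal (by positivity)] at h1
  have hAε : 64 * A ^ (-(1:ℝ)/2) < ε := by
    have hApow : A ^ (-(1:ℝ)/2) = B⁻¹ := by
      rw [hA, ← Real.rpow_natCast B 2, ← Real.rpow_mul (le_of_lt hBpos)]
      norm_num
      exact Real.rpow_neg_one B
    rw [hApow]
    have hεB : ε * B = ε + 64 := by
      rw [hB]; field_simp
    rw [show (64:ℝ) * B⁻¹ = 64 / B by rw [div_eq_mul_inv], div_lt_iff₀ hBpos]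
    nlinarith
  linarith
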